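/- arXiv:2109.02130 — 10 statements merged into one kernel-verified Lean document; each statement's English description precedes it below -/
import Mathlib

section
/- Let f ∈ ℤ[x] be a monic squarefree polynomial of degree n, let A, B ∈ ℤ^{n×n} both have characteristic polynomial f, and let p be a prime such that the reduction of f modulo p is squarefree in 𝔽_p[x] (equivalently, p does not divide disc(f)). Then A and B are ℤ_p-conjugate, i.e., there exists a matrix C ∈ ℤ_p^{n×n} with det C a unit of ℤ_p and A·C = C·B. -/
open Polynomial Matrix UniqueFactorizationMonoid

namespace ZpConjAux



lemma sum_mulVec {R : Type*} [CommRing R] {n : ℕ} {ι : Type*} (s : Finset ι)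
    (F : ι → Matrix (Fin n) (Fin n) R) (v : Fin n → R) :
    (∑ i ∈ s, F i) *ᵥ v = ∑ i ∈ s, (F i) *ᵥ v := by
  classical
  induction s using Finset.induction_on with
  | empty => simp
  | insert _ _ ha ih =>
      rw [Finset.sum_insert ha, Finset.sum_insert ha, Matrix.add_mulVec, ih]

lemma mulVec_sum {R : Type*} [CommRing R] {n : ℕ} {ι : Type*} (s : Finset ι)
    (M : Matrix (Fin n) (Fin n) R) (f : ι → Fin n → R) :
    M *ᵥ (∑ i ∈ s, f i) = ∑ i ∈ s, M *ᵥ f i := by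
  classical
  induction s using Finset.induction_on with
  | empty => simp
  | insert _ _ ha ih =>
      rw [Finset.sum_insert ha, Finset.sum_insert ha, Matrix.mulVec_add, ih]

lemma smul_pow_mulVec {R : Type*} [CommRing R] {n : ℕ}
    (M : Matrix (Fin n) (Fin n) R) (a : R) (k : ℕ) (v : Fin n → R) :
    (aeval M (C a * X ^ k)) *ᵥ v = a • ((M ^ k) *ᵥ v) := by
  rw [_root_.map_mul, aeval_C, map_pow, aeval_X, Algebra.algebraMap_eq_smul_one, smul_mul_assoc,
    one_mul, Matrix.smul_mulVec]

lemma aeval_mulVec_eigen {L : Type*} [CommRing L] {n : ℕ}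
    (M : Matrix (Fin n) (Fin n) L) (μ : L) (u : Fin n → L)
    (hu : M *ᵥ u = μ • u) (q : L[X]) :
    (aeval M q) *ᵥ u = q.eval μ • u := by
  have hk : ∀ k : ℕ, (M ^ k) *ᵥ u = μ ^ k • u := by
    intro k
    induction k with
    | zero => simp
    | succ k ih =>
        rw [pow_succ', ← Matrix.mulVec_mulVec, ih, Matrix.mulVec_smul, hu, smul_smul, ← pow_succ]
  induction q using Polynomial.induction_on' with
  | add p q hp hq => rw [map_add, Matrix.add_mulVec, hp, hq, eval_add, add_smul]
  | monomial k a =>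
      rw [← C_mul_X_pow_eq_monomial, smul_pow_mulVec, hk, eval_mul, eval_C, eval_pow, eval_X,
        smul_smul]





lemma exists_kerVec {K : Type*} [Field K] {n : ℕ} (M : Matrix (Fin n) (Fin n) K) (g : K[X])
    (hirr : Irreducible g) (hdvd : g ∣ M.charpoly) :
    ∃ w : Fin n → K, w ≠ 0 ∧ (aeval M g) *ᵥ w = 0 := by
  classical
  haveI := Fact.mk hirr
  set L := AdjoinRoot g with hL
  let φ : K →+* L := algebraMap K L
  set μ : L := AdjoinRoot.root g with hμ
  set ML : Matrix (Fin n) (Fin n) L := M.map φ with hML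
  obtain ⟨t, ht⟩ := hdvd
  have hchar : ML.charpoly = M.charpoly.map φ := Matrix.charpoly_map M φ
  have hgμ : (g.map φ).eval μ = 0 := by
    rw [eval_map]
    exact AdjoinRoot.eval₂_root g
  have hroot : (ML.charpoly).eval μ = 0 := by
    rw [hchar, ht, Polynomial.map_mul, eval_mul, hgμ, zero_mul]
  -- det (scalar μ - ML) = 0
  have hdet : (Matrix.scalar (Fin n) μ - ML).det = 0 := by
    have h1 := eval_det (charmatrix ML) μ
    rw [show (charmatrix ML).det = ML.charpoly from rfl, hroot,
      Matrix.matPolyEquiv_charmatrix, eval_sub, eval_X, eval_C] at h1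
    exact h1.symm
  obtain ⟨u, hu0, huv⟩ := (Matrix.exists_mulVec_eq_zero_iff).mpr hdet
  have heig : ML *ᵥ u = μ • u := by
    rw [Matrix.sub_mulVec] at huv
    have hsc : (Matrix.scalar (Fin n) μ) *ᵥ u = μ • u := by
      ext i
      rw [Matrix.scalar_apply, Matrix.mulVec_diagonal]
      simp
    rw [hsc, sub_eq_zero] at huv
    exact huv.symm
  -- (aeval ML (g.map φ)) *ᵥ u = 0
  have h2 : (aeval ML (g.map φ)) *ᵥ u = 0 := by
    rw [aeval_mulVec_eigen ML μ u heig, hgμ, zero_smul]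
  have h3 : (aeval ML (g.map φ)).det = 0 :=
    Matrix.exists_mulVec_eq_zero_iff.mp ⟨u, hu0, h2⟩
  have h4 : aeval ML (g.map φ) = (aeval M g).map φ := by
    rw [Polynomial.aeval_map_algebraMap]
    have h := Polynomial.aeval_algHom_apply ((Algebra.ofId K L).mapMatrix) M g
    rw [AlgHom.mapMatrix_apply, AlgHom.mapMatrix_apply] at h
    exact h
  have h5 : (aeval M g).det = 0 := by
    have := h3
    rw [h4, ← RingHom.mapMatrix_apply, ← RingHom.map_det] at this
    exact (map_eq_zero_iff φ (RingHom.injective φ)).mp this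
  obtain ⟨w, hw0, hw⟩ := Matrix.exists_mulVec_eq_zero_iff.mpr h5
  exact ⟨w, hw0, hw⟩









lemma aeval_mul_mulVec {R : Type*} [CommRing R] {n : ℕ}
    (M : Matrix (Fin n) (Fin n) R) (q r : R[X]) (u : Fin n → R) :
    (aeval M (q * r)) *ᵥ u = (aeval M q) *ᵥ ((aeval M r) *ᵥ u) := by
  rw [_root_.map_mul, Matrix.mulVec_mulVec]

theorem exists_cyclic {K : Type*} [Field K] {n : ℕ} (M : Matrix (Fin n) (Fin n) K) (hsf : Squarefree M.charpoly) :
    ∃ v : Fin n → K, ∀ c : Fin n → K,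
      ∑ j : Fin n, c j • ((M ^ (j : ℕ)) *ᵥ v) = 0 → c = 0 := by
  classical
  have hf0 : M.charpoly ≠ 0 := (Matrix.charpoly_monic M).ne_zero
  have hnd : (normalizedFactors M.charpoly).Nodup :=
    (squarefree_iff_nodup_normalizedFactors hf0).mp hsf
  set s : Finset K[X] := (normalizedFactors M.charpoly).toFinset with hs
  have hsval : s.val = normalizedFactors M.charpoly := Multiset.dedup_eq_self.mpr hnd
  have hmem : ∀ g ∈ s, g ∈ normalizedFactors M.charpoly := by
    intro g hg; rwa [hs, Multiset.mem_toFinset] at hg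
  have hirr : ∀ g ∈ s, Irreducible g := fun g hg =>
    irreducible_of_normalized_factor g (hmem g hg)
  have hprod : Associated (∏ g ∈ s, g) M.charpoly := by
    have he : (∏ g ∈ s, g) = (normalizedFactors M.charpoly).prod := by
      rw [Finset.prod_eq_multiset_prod, ← hsval, Multiset.map_id']
    rw [he]
    exact prod_normalizedFactors hf0
  have hcop : ∀ g ∈ s, ∀ g' ∈ s, g ≠ g' → IsCoprime g g' := by
    intro g hg g' hg' hne
    refine (hirr g hg).coprime_iff_not_dvd.mpr fun hdvd => hne ?_
    have hassoc : Associated g g' := (hirr g hg).associated_of_dvd (hirr g' hg') hdvd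
    have heq := normalize_eq_normalize hassoc.dvd hassoc.symm.dvd
    rwa [normalize_normalized_factor g (hmem g hg),
      normalize_normalized_factor g' (hmem g' hg')] at heq
  choose w hw0 hwker using fun g : {x // x ∈ s} =>
    exists_kerVec M g.1 (hirr g.1 g.2) (dvd_of_mem_normalizedFactors (hmem g.1 g.2))
  set v : Fin n → K := ∑ g ∈ s.attach, w g with hv
  refine ⟨v, fun c hc => ?_⟩
  set h : K[X] := ∑ j : Fin n, C (c j) * X ^ (j : ℕ) with hh
  have hhv : (aeval M h) *ᵥ v = 0 := by
    rw [hh, map_sum, sum_mulVec]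
    calc ∑ j : Fin n, (aeval M (C (c j) * X ^ (j : ℕ))) *ᵥ v
        = ∑ j : Fin n, c j • ((M ^ (j : ℕ)) *ᵥ v) :=
          Finset.sum_congr rfl fun j _ => smul_pow_mulVec M (c j) j v
      _ = 0 := hc
  have hdvd_h : ∀ g ∈ s, g ∣ h := by
    intro g hg
    set t : K[X] := ∏ g' ∈ s.erase g, g' with hts
    have hgt : g * t = ∏ g'' ∈ s, g'' := Finset.mul_prod_erase s id hg
    have hfd : M.charpoly ∣ g * t := by rw [hgt]; exact hprod.symm.dvd
    have hcop_gt : IsCoprime g t :=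
      IsCoprime.prod_right fun g' hg' =>
        hcop g hg g' (Finset.mem_of_mem_erase hg') (Finset.ne_of_mem_erase hg').symm
    set wg : Fin n → K := w ⟨g, hg⟩ with hwg
    have hgker : (aeval M g) *ᵥ wg = 0 := hwker ⟨g, hg⟩
    have step1 : (aeval M t) *ᵥ v = (aeval M t) *ᵥ wg := by
      rw [hv, mulVec_sum]
      rw [Finset.sum_eq_single (⟨g, hg⟩ : {x // x ∈ s})]
      · intro g' _ hne
        have hg'e : g'.1 ∈ s.erase g :=
          Finset.mem_erase.mpr ⟨fun heq => hne (Subtype.ext heq), g'.2⟩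
        obtain ⟨r, hr⟩ := Finset.dvd_prod_of_mem id hg'e
        rw [show t = g'.1 * r from hr, mul_comm, aeval_mul_mulVec, hwker g',
          Matrix.mulVec_zero]
      · intro hne
        exact absurd (Finset.mem_attach s ⟨g, hg⟩) hne
    obtain ⟨a, b, hab⟩ := hcop_gt
    have hwg_eq : wg = (aeval M b) *ᵥ ((aeval M t) *ᵥ wg) := by
      have h1 : (aeval M (a * g + b * t)) *ᵥ wg = wg := by
        rw [hab, _root_.map_one, Matrix.one_mulVec]
      rw [map_add, Matrix.add_mulVec, aeval_mul_mulVec, aeval_mul_mulVec, hgker,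
        Matrix.mulVec_zero, zero_add] at h1
      exact h1.symm
    have hht : (aeval M h) *ᵥ ((aeval M t) *ᵥ wg) = 0 := by
      rw [← step1, ← aeval_mul_mulVec, mul_comm, aeval_mul_mulVec, hhv, Matrix.mulVec_zero]
    have hhw : (aeval M h) *ᵥ wg = 0 := by
      calc (aeval M h) *ᵥ wg
          = (aeval M h) *ᵥ ((aeval M b) *ᵥ ((aeval M t) *ᵥ wg)) := by rw [← hwg_eq]
        _ = (aeval M b) *ᵥ ((aeval M h) *ᵥ ((aeval M t) *ᵥ wg)) := by
            rw [← aeval_mul_mulVec, mul_comm, aeval_mul_mulVec]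
        _ = 0 := by rw [hht, Matrix.mulVec_zero]
    by_contra hgh
    have hcoph : IsCoprime g h := (hirr g hg).coprime_iff_not_dvd.mpr hgh
    obtain ⟨α, β, hαβ⟩ := hcoph
    have : wg = 0 := by
      have h1 : (aeval M (α * g + β * h)) *ᵥ wg = wg := by
        rw [hαβ, _root_.map_one, Matrix.one_mulVec]
      rw [map_add, Matrix.add_mulVec, aeval_mul_mulVec, aeval_mul_mulVec, hgker, hhw,
        Matrix.mulVec_zero, Matrix.mulVec_zero, add_zero] at h1
      exact h1.symm
    exact hw0 ⟨g, hg⟩ this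
  have hfh : M.charpoly ∣ h := by
    refine dvd_trans hprod.symm.dvd ?_
    refine Finset.prod_dvd_of_coprime ?_ hdvd_h
    intro x hx y hy hne
    exact hcop x hx y hy hne
  have hzero : h = 0 := by
    by_contra h0
    have hdeg_le : M.charpoly.natDegree ≤ h.natDegree := Polynomial.natDegree_le_of_dvd hfh h0
    have hn : M.charpoly.natDegree = n := by
      rw [Matrix.charpoly_natDegree_eq_dim, Fintype.card_fin]
    have hlt : h.natDegree < n := by
      rcases Nat.eq_zero_or_pos n with hn0 | hn0
      · exfalso
        -- n = 0 : h is an empty sum, so h = 0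
        apply h0
        rw [hh]
        apply Finset.sum_eq_zero
        intro j _
        exact absurd (j.isLt.trans_le hn0.le) (Nat.not_lt_zero _)
      rw [Polynomial.natDegree_lt_iff_degree_lt h0, hh]
      apply lt_of_le_of_lt (Polynomial.degree_sum_le _ _)
      rw [Finset.sup_lt_iff (by exact_mod_cast WithBot.bot_lt_coe n)]
      intro j _
      exact lt_of_le_of_lt (degree_C_mul_X_pow_le _ _)
        (by exact_mod_cast WithBot.coe_lt_coe.mpr j.isLt)
    omega
  funext j
  have hcj := congrArg (fun q : K[X] => q.coeff (j : ℕ)) hzero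
  simp only [hh, Polynomial.finset_sum_coeff, Polynomial.coeff_C_mul,
    Polynomial.coeff_X_pow, Polynomial.coeff_zero] at hcj
  rw [Finset.sum_eq_single j] at hcj
  · simpa using hcj
  · intro j' _ hne
    rw [if_neg (fun heq => hne (Fin.ext heq.symm)), mul_zero]
  · intro hne
    exact absurd (Finset.mem_univ j) hne






noncomputable def compMat (p : ℕ) [Fact p.Prime] (n : ℕ) (f : ℤ[X]) :
    Matrix (Fin n) (Fin n) ℤ_[p] :=
  Matrix.of fun k j => if (j : ℕ) + 1 = n then -((f.coeff (k : ℕ) : ℤ) : ℤ_[p])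
    else if (k : ℕ) = (j : ℕ) + 1 then 1 else 0

lemma map_mulVec_apply {R S : Type*} [CommRing R] [CommRing S] {n : ℕ} (φ : R →+* S)
    (A : Matrix (Fin n) (Fin n) R) (u : Fin n → R) (i : Fin n) :
    φ ((A *ᵥ u) i) = ((A.map ⇑φ) *ᵥ (⇑φ ∘ u)) i := by
  simp [Matrix.mulVec, dotProduct, map_sum, Matrix.map_apply]

lemma key (p : ℕ) [Fact p.Prime] {n : ℕ} (f : ℤ[X]) (hmonic : f.Monic)
    (hdeg : f.natDegree = n)
    (M : Matrix (Fin n) (Fin n) ℤ) (hM : M.charpoly = f)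
    (hp : Squarefree (f.map (Int.castRingHom (ZMod p)))) :
    ∃ P : Matrix (Fin n) (Fin n) ℤ_[p], IsUnit P.det ∧
      M.map (Int.cast : ℤ → ℤ_[p]) * P = P * compMat p n f := by
  classical
  set M' : Matrix (Fin n) (Fin n) ℤ_[p] := M.map (Int.cast : ℤ → ℤ_[p]) with hM'
  have hM'c : M'.charpoly = f.map (Int.castRingHom ℤ_[p]) := by
    have : M' = M.map ⇑(Int.castRingHom ℤ_[p]) := rfl
    rw [this, Matrix.charpoly_map, hM]
  set Mb : Matrix (Fin n) (Fin n) (ZMod p) := M'.map ⇑(PadicInt.toZMod) with hMb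
  have hbar : Mb = M.map ⇑(Int.castRingHom (ZMod p)) := by
    rw [hMb, hM', Matrix.map_map]
    ext i j
    simp [Function.comp, Matrix.map_apply]
  have hcharbar : Mb.charpoly = f.map (Int.castRingHom (ZMod p)) := by
    rw [hbar, Matrix.charpoly_map, hM]
  have hsfbar : Squarefree Mb.charpoly := hcharbar ▸ hp
  obtain ⟨vb, hvb⟩ := exists_cyclic Mb hsfbar
  set v : Fin n → ℤ_[p] := fun i => ((vb i).val : ℤ_[p]) with hv
  have hvbar : ∀ i, PadicInt.toZMod (v i) = vb i := by
    intro i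
    rw [hv]
    simp only [map_natCast]
    rw [ZMod.natCast_val, ZMod.cast_id]
  set P : Matrix (Fin n) (Fin n) ℤ_[p] :=
    Matrix.of (fun i j => ((M' ^ (j : ℕ)) *ᵥ v) i) with hP
  -- Cayley-Hamilton
  have hCH : ∑ k ∈ Finset.range (n + 1), ((f.coeff k : ℤ) : ℤ_[p]) • M' ^ k = 0 := by
    have h0 := Matrix.aeval_self_charpoly M'
    rw [hM'c, Polynomial.aeval_eq_sum_range] at h0
    have hnd : (f.map (Int.castRingHom ℤ_[p])).natDegree = n := by
      rw [hmonic.natDegree_map, hdeg]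
    rw [hnd] at h0
    convert h0 using 2 with k
    rw [Polynomial.coeff_map]
    norm_cast
  have hcoeffn : ((f.coeff n : ℤ) : ℤ_[p]) = 1 := by
    rw [← hdeg, hmonic.coeff_natDegree]
    norm_cast
  have hpow_n : (M' ^ n) *ᵥ v
      = -∑ k ∈ Finset.range n, ((f.coeff k : ℤ) : ℤ_[p]) • ((M' ^ k) *ᵥ v) := by
    have h1 : (∑ k ∈ Finset.range (n + 1), ((f.coeff k : ℤ) : ℤ_[p]) • M' ^ k) *ᵥ v
        = (0 : Matrix (Fin n) (Fin n) ℤ_[p]) *ᵥ v := by rw [hCH]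
    rw [Matrix.zero_mulVec, sum_mulVec, Finset.sum_range_succ, hcoeffn, one_smul] at h1
    have h2 : ∀ k ∈ Finset.range n,
        (((f.coeff k : ℤ) : ℤ_[p]) • M' ^ k) *ᵥ v
          = ((f.coeff k : ℤ) : ℤ_[p]) • ((M' ^ k) *ᵥ v) := fun k _ =>
      Matrix.smul_mulVec _ _ _
    rw [Finset.sum_congr rfl h2] at h1
    rw [eq_neg_iff_add_eq_zero, add_comm]
    exact h1
  have hMP : ∀ (j : Fin n) (i : Fin n),
      (M' * P) i j = ((M' ^ ((j : ℕ) + 1)) *ᵥ v) i := by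
    intro j i
    rw [pow_succ', ← Matrix.mulVec_mulVec]
    simp [Matrix.mul_apply, Matrix.mulVec, dotProduct, hP, Matrix.of_apply]
  refine ⟨P, ?_, ?_⟩
  · -- det is a unit
    have hPbar : ∀ i j, PadicInt.toZMod (P i j) = ((Mb ^ (j : ℕ)) *ᵥ vb) i := by
      intro i j
      rw [hP, Matrix.of_apply, map_mulVec_apply]
      have hpowmap : (M' ^ (j : ℕ)).map ⇑(PadicInt.toZMod) = Mb ^ (j : ℕ) := by
        have := map_pow (RingHom.mapMatrix (PadicInt.toZMod (p := p))) M' (j : ℕ)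
        simpa [RingHom.mapMatrix_apply] using this
      rw [hpowmap]
      congr 1
      funext i'
      exact hvbar i'
    have hdet0 : PadicInt.toZMod P.det ≠ 0 := by
      intro hz
      have hdetPbar : (P.map ⇑(PadicInt.toZMod)).det = 0 := by
        rw [← RingHom.mapMatrix_apply, ← RingHom.map_det, hz]
      obtain ⟨c, hc0, hcz⟩ := Matrix.exists_mulVec_eq_zero_iff.mpr hdetPbar
      apply hc0
      apply hvb
      funext i
      have := congrFun hcz i
      simp only [Matrix.mulVec, dotProduct, Matrix.map_apply, Pi.zero_apply] at this
      calc (∑ j : Fin n, c j • ((Mb ^ (j : ℕ)) *ᵥ vb)) i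
          = ∑ j : Fin n, PadicInt.toZMod (P i j) * c j := by
            rw [Finset.sum_apply]
            refine Finset.sum_congr rfl fun j _ => ?_
            rw [Pi.smul_apply, smul_eq_mul, hPbar i j, mul_comm]
        _ = 0 := this
    rw [← IsLocalRing.notMem_maximalIdeal, ← PadicInt.ker_toZMod, RingHom.mem_ker]
    exact hdet0
  · -- companion relation
    ext i j
    rw [hMP j i]
    by_cases hj : (j : ℕ) + 1 = n
    · rw [Matrix.mul_apply]
      simp only [compMat, Matrix.of_apply, if_pos hj, hj]
      rw [hpow_n]
      rw [Pi.neg_apply, Finset.sum_apply, ← Fin.sum_univ_eq_sum_range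
        (fun k => (((f.coeff k : ℤ) : ℤ_[p]) • ((M' ^ k) *ᵥ v)) i), ← Finset.sum_neg_distrib]
      refine Finset.sum_congr rfl fun k _ => ?_
      rw [Pi.smul_apply, smul_eq_mul]
      show -(((f.coeff (k : ℕ) : ℤ) : ℤ_[p]) * ((M' ^ (k : ℕ)) *ᵥ v) i)
        = ((M' ^ (k : ℕ)) *ᵥ v) i * -((f.coeff (k : ℕ) : ℤ) : ℤ_[p])
      ring
    · have hjlt : (j : ℕ) + 1 < n := Nat.lt_of_le_of_ne (Nat.succ_le_of_lt j.isLt) hj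
      rw [Matrix.mul_apply]
      simp only [compMat, Matrix.of_apply, if_neg hj]
      rw [Finset.sum_eq_single (⟨(j : ℕ) + 1, hjlt⟩ : Fin n)]
      · rw [if_pos rfl, mul_one, hP]
        simp only [Matrix.of_apply]
      · intro k _ hk
        rw [if_neg, mul_zero]
        exact fun hK => hk (Fin.ext hK)
      · intro habs
        exact absurd (Finset.mem_univ _) habs


end ZpConjAux

/-- If `f ∈ ℤ[x]` is monic squarefree of degree `n`, `A, B ∈ ℤ^{n×n}` both have
characteristic polynomial `f`, and `p` is a prime such that `f mod p` is squarefree in `𝔽_p[x]`,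
then `A` and `B` are `ℤ_p`-conjugate. -/
theorem zp_conjugate_of_squarefree_reduction
    (n : ℕ) (f : Polynomial ℤ) (hmonic : f.Monic) (hsf : Squarefree f)
    (hdeg : f.natDegree = n)
    (A B : Matrix (Fin n) (Fin n) ℤ)
    (hA : A.charpoly = f) (hB : B.charpoly = f)
    (p : ℕ) [Fact p.Prime]
    (hp : Squarefree (f.map (Int.castRingHom (ZMod p)))) :
    ∃ C : Matrix (Fin n) (Fin n) ℤ_[p],
      IsUnit C.det ∧ A.map (Int.cast : ℤ → ℤ_[p]) * C = C * B.map (Int.cast : ℤ → ℤ_[p]) := by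
  obtain ⟨PA, hPAdet, hPAeq⟩ := ZpConjAux.key p f hmonic hdeg A hA hp
  obtain ⟨PB, hPBdet, hPBeq⟩ := ZpConjAux.key p f hmonic hdeg B hB hp
  haveI : Invertible PB := PB.invertibleOfIsUnitDet hPBdet
  haveI : Invertible PA := PA.invertibleOfIsUnitDet hPAdet
  set N := ZpConjAux.compMat p n f
  set A' := A.map (Int.cast : ℤ → ℤ_[p])
  set B' := B.map (Int.cast : ℤ → ℤ_[p])
  refine ⟨PA * ⅟PB, ?_, ?_⟩
  · haveI : Invertible (PA * ⅟PB) := invertibleMul PA (⅟PB)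
    exact (PA * ⅟PB).isUnit_det_of_invertible
  · have h2 : ⅟PB * (B' * PB) * ⅟PB = ⅟PB * B' := by
      rw [← mul_assoc ⅟PB B' PB, mul_assoc (⅟PB * B') PB ⅟PB, mul_invOf_self, mul_one]
    have h3 : ⅟PB * (PB * N) * ⅟PB = N * ⅟PB := by
      rw [← mul_assoc, invOf_mul_self, one_mul]
    have h4 : ⅟PB * B' = N * ⅟PB := by rw [← h2, hPBeq, h3]
    rw [← mul_assoc, hPAeq, mul_assoc, ← h4, ← mul_assoc]
end

section
/- Let p be a prime and let A, B ∈ ℤ^{n×n}. If A and B are ℤ_p-conjugate (there exists C ∈ ℤ_p^{n×n} with det C a unit of ℤ_p and A·C = C·B), then there exists an integer matrix C' ∈ ℤ^{n×n} with A·C' = C'·B and p ∤ det C'; in particular A and B are conjugate by an element of GL_n(ℤ_(p)), the localization of ℤ at p. -/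
set_option maxHeartbeats 1000000
open Matrix

section Aux
variable {p : ℕ} [Fact p.Prime] {n : ℕ}

/-- Sylvester-type map `C ↦ A C - C B` as a linear map. -/
def sylv {R : Type*} [CommRing R] (A B : Matrix (Fin n) (Fin n) R) :
    Matrix (Fin n) (Fin n) R →ₗ[R] Matrix (Fin n) (Fin n) R where
  toFun C := A * C - C * B
  map_add' C D := by simp [mul_add, add_mul]; abel
  map_smul' r C := by simp [mul_smul_comm, smul_mul_assoc, smul_sub]

lemma sylv_map {R S : Type*} [CommRing R] [CommRing S] (f : R →+* S)
    (A B C : Matrix (Fin n) (Fin n) R) :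
    (sylv A B C).map f = sylv (A.map f) (B.map f) (C.map f) := by
  simp [sylv, Matrix.map_sub, Matrix.map_mul]

def uncur (R : Type*) [CommRing R] (n : ℕ) :
    Matrix (Fin n) (Fin n) R ≃ₗ[R] (Fin n × Fin n → R) where
  toFun M := fun q => M q.1 q.2
  invFun f := Matrix.of fun i j => f (i, j)
  map_add' _ _ := rfl
  map_smul' _ _ := rfl
  left_inv _ := rfl
  right_inv _ := rfl

lemma cast_indep_basis (b : Module.Basis (Fin n × Fin n) ℚ (Matrix (Fin n) (Fin n) ℚ)) :
    LinearIndependent ℚ_[p] (fun ij => (b ij).map (Rat.cast : ℚ → ℚ_[p])) := by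
  set P : Matrix (Fin n × Fin n) (Fin n × Fin n) ℚ := Matrix.of fun ij => uncur ℚ n (b ij) with hP
  have hrows : LinearIndependent ℚ (fun ij => P ij) :=
    b.linearIndependent.map' (uncur ℚ n).toLinearMap (LinearMap.ker_eq_bot.2 (uncur ℚ n).injective)
  have hPu : IsUnit P := Matrix.linearIndependent_rows_iff_isUnit.mp hrows
  have hdet : P.det ≠ 0 := ((Matrix.isUnit_iff_isUnit_det P).mp hPu).ne_zero
  set Pp : Matrix (Fin n × Fin n) (Fin n × Fin n) ℚ_[p] := P.map (Rat.cast) with hPp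
  have hdetp : Pp.det ≠ 0 := by
    have : Pp.det = ((P.det : ℚ) : ℚ_[p]) := ((Rat.castHom ℚ_[p]).map_det P).symm
    rw [this]
    exact_mod_cast hdet
  have hPpu : IsUnit Pp := (Matrix.isUnit_iff_isUnit_det Pp).mpr (isUnit_iff_ne_zero.mpr hdetp)
  have hrowsp : LinearIndependent ℚ_[p] (fun ij => Pp ij) :=
    Matrix.linearIndependent_rows_iff_isUnit.mpr hPpu
  have heq : (fun ij => Pp ij) = fun ij => uncur ℚ_[p] n ((b ij).map Rat.cast) := rfl
  rw [heq] at hrowsp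
  exact hrowsp.of_comp (uncur ℚ_[p] n).toLinearMap

lemma cast_indep {ι : Type*} (v : ι → Matrix (Fin n) (Fin n) ℚ)
    (hv : LinearIndependent ℚ v) :
    LinearIndependent ℚ_[p] (fun i => (v i).map (Rat.cast : ℚ → ℚ_[p])) := by
  classical
  have hs := hv.linearIndepOn_id
  let t := hs.extend (Set.subset_univ _)
  let bE : Module.Basis t ℚ (Matrix (Fin n) (Fin n) ℚ) := Module.Basis.extend hs
  haveI : Fintype t := FiniteDimensional.fintypeBasisIndex bE
  have hcard : Fintype.card t = Fintype.card (Fin n × Fin n) := by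
    have h1 := Module.finrank_eq_card_basis bE
    have h2 : Module.finrank ℚ (Matrix (Fin n) (Fin n) ℚ) = n * n := by
      simp [Module.finrank_matrix]
    simp [← h1, h2]
  let e : t ≃ (Fin n × Fin n) := Fintype.equivOfCardEq hcard
  have hb' := cast_indep_basis (p := p) (bE.reindex e)
  have hmem : ∀ i, v i ∈ t := fun i => hs.subset_extend _ ⟨i, rfl⟩
  have hinj : Function.Injective (fun i => e ⟨v i, hmem i⟩) := by
    intro i j hij
    exact hv.injective (by simpa [Subtype.ext_iff] using e.injective hij)
  have := hb'.comp _ hinj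
  convert this using 1
  funext i
  show (v i).map Rat.cast = ((bE.reindex e) (e ⟨v i, hmem i⟩)).map Rat.cast
  rw [Module.Basis.reindex_apply, e.symm_apply_apply, Module.Basis.extend_apply_self]

lemma exists_int_smul (M : Matrix (Fin n) (Fin n) ℚ) :
    ∃ (d : ℤ) (W : Matrix (Fin n) (Fin n) ℤ), d ≠ 0 ∧
      W.map (Int.cast : ℤ → ℚ) = (d : ℚ) • M := by
  classical
  set d : ℤ := ∏ k : Fin n, ∏ l : Fin n, ((M k l).den : ℤ) with hd
  have hden : ∀ k l, ((M k l).den : ℤ) ∣ d := by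
    intro k l
    refine dvd_trans ?_ (Finset.dvd_prod_of_mem (fun k => ∏ l : Fin n, ((M k l).den : ℤ))
      (Finset.mem_univ k))
    exact Finset.dvd_prod_of_mem (fun l => ((M k l).den : ℤ)) (Finset.mem_univ l)
  refine ⟨d, Matrix.of (fun k l => (M k l).num * (d / ((M k l).den : ℤ))), ?_, ?_⟩
  · rw [hd]
    apply Finset.prod_ne_zero_iff.mpr
    intro k _
    apply Finset.prod_ne_zero_iff.mpr
    intro l _
    exact_mod_cast (M k l).den_nz
  · ext k l
    obtain ⟨e, he⟩ := hden k l
    have h0 : ((M k l).den : ℤ) ≠ 0 := by exact_mod_cast (M k l).den_nz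
    simp only [Matrix.map_apply, Matrix.of_apply, Matrix.smul_apply, smul_eq_mul]
    rw [he, Int.mul_ediv_cancel_left _ h0]
    have hq : ((M k l).den : ℚ) * M k l = ((M k l).num : ℚ) := by
      rw [mul_comm, Rat.mul_den_eq_num]
    push_cast
    calc ((M k l).num : ℚ) * e = (((M k l).den : ℚ) * M k l) * e := by rw [hq]
      _ = ((M k l).den : ℚ) * e * M k l := by ring

lemma exists_pow_norm_le (z : ℚ_[p]) : ∃ k : ℕ, ‖(p : ℚ_[p])^k * z‖ ≤ 1 := by
  by_cases hz : z = 0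
  · exact ⟨0, by simp [hz]⟩
  · refine ⟨(-z.valuation).toNat, ?_⟩
    have hp1 : (1:ℝ) ≤ p := by exact_mod_cast (Fact.out : p.Prime).one_lt.le
    have hp0 : (p:ℝ) ≠ 0 := by positivity
    rw [norm_mul, norm_pow, Padic.norm_p, Padic.norm_eq_zpow_neg_valuation hz]
    have h1 : ((p:ℝ))⁻¹ ^ (-z.valuation).toNat = (p:ℝ) ^ (-((-z.valuation).toNat : ℤ)) := by
      rw [inv_pow, ← zpow_natCast, ← _root_.zpow_neg]
    rw [h1, ← zpow_add₀ hp0]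
    apply zpow_le_one_of_nonpos₀ hp1
    have := Int.self_le_toNat (-z.valuation)
    omega

lemma pow_norm_le_mono (z : ℚ_[p]) {k k' : ℕ} (hk : k ≤ k') (h : ‖(p : ℚ_[p])^k * z‖ ≤ 1) :
    ‖(p : ℚ_[p])^k' * z‖ ≤ 1 := by
  have : (p : ℚ_[p])^k' * z = (p : ℚ_[p])^(k' - k) * ((p : ℚ_[p])^k * z) := by
    rw [← mul_assoc, ← pow_add]
    congr 2
    omega
  rw [this, norm_mul]
  calc ‖(p : ℚ_[p])^(k'-k)‖ * ‖(p : ℚ_[p])^k * z‖ ≤ 1 * 1 := by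
        apply mul_le_mul _ h (norm_nonneg _) zero_le_one
        rw [norm_pow, Padic.norm_p]
        apply pow_le_one₀ (by positivity)
        have hp1 : (1:ℝ) ≤ p := by exact_mod_cast (Fact.out : p.Prime).one_lt.le
        exact inv_le_one_of_one_le₀ hp1
    _ = 1 := by ring

end Aux

/-- If `A, B ∈ ℤ^{n×n}` are `ℤ_p`-conjugate, then there is an integer matrix `C'`
with `A·C' = C'·B` and `p ∤ det C'`; in particular `A` and `B` are conjugate by an element of
`GL_n(ℤ_(p))`. -/
theorem int_conjugating_matrix_of_zp_conjugate
    (n : ℕ) (p : ℕ) [Fact p.Prime]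
    (A B : Matrix (Fin n) (Fin n) ℤ)
    (h : ∃ C : Matrix (Fin n) (Fin n) ℤ_[p],
      IsUnit C.det ∧ A.map (Int.cast : ℤ → ℤ_[p]) * C = C * B.map (Int.cast : ℤ → ℤ_[p])) :
    ∃ C' : Matrix (Fin n) (Fin n) ℤ, A * C' = C' * B ∧ ¬ (p : ℤ) ∣ C'.det := by
  classical
  obtain ⟨C, hCu, hC⟩ := h
  set AQ : Matrix (Fin n) (Fin n) ℚ := A.map (Int.cast : ℤ → ℚ) with hAQ
  set BQ : Matrix (Fin n) (Fin n) ℚ := B.map (Int.cast : ℤ → ℚ) with hBQ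
  set Ap : Matrix (Fin n) (Fin n) ℚ_[p] := A.map (Int.cast : ℤ → ℚ_[p]) with hAp
  set Bp : Matrix (Fin n) (Fin n) ℚ_[p] := B.map (Int.cast : ℤ → ℚ_[p]) with hBp
  set D : Matrix (Fin n) (Fin n) ℚ_[p] := C.map (PadicInt.Coe.ringHom) with hDdef
  -- the Sylvester equation holds for D over ℚ_p
  have hDs : sylv Ap Bp D = 0 := by
    have h1 : (A.map (Int.cast : ℤ → ℤ_[p])).map (PadicInt.Coe.ringHom) = Ap := by
      rw [Matrix.map_map, hAp]; congr 1
    have h2 : (B.map (Int.cast : ℤ → ℤ_[p])).map (PadicInt.Coe.ringHom) = Bp := by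
      rw [Matrix.map_map, hBp]; congr 1
    have := congrArg (fun M => M.map (PadicInt.Coe.ringHom : ℤ_[p] →+* ℚ_[p])) hC
    simp only [Matrix.map_mul, h1, h2] at this
    show Ap * D - D * Bp = 0
    rw [hDdef, this, sub_self]
  -- kernel of the Sylvester map over ℚ and a complement
  set K : Submodule ℚ (Matrix (Fin n) (Fin n) ℚ) := LinearMap.ker (sylv AQ BQ) with hK
  obtain ⟨K', hcompl⟩ := Submodule.exists_isCompl K
  let w := Module.finBasis ℚ K
  let c := Module.finBasis ℚ K'
  set R : ℕ := Module.finrank ℚ K with hR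
  set S : ℕ := Module.finrank ℚ K' with hS
  let bb : Module.Basis (Fin R ⊕ Fin S) ℚ (Matrix (Fin n) (Fin n) ℚ) :=
    (w.prod c).map (Submodule.prodEquivOfIsCompl K K' hcompl)
  have hbbl : ∀ i, bb (Sum.inl i) = (w i : Matrix (Fin n) (Fin n) ℚ) := by
    intro i
    simp [bb, Submodule.coe_prodEquivOfIsCompl']
  have hbbr : ∀ j, bb (Sum.inr j) = (c j : Matrix (Fin n) (Fin n) ℚ) := by
    intro j
    simp [bb, Submodule.coe_prodEquivOfIsCompl']
  -- cast of bb is a ℚ_p-basis (independent of full cardinality)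
  set u : (Fin R ⊕ Fin S) → Matrix (Fin n) (Fin n) ℚ_[p] :=
    fun i => (bb i).map (Rat.cast : ℚ → ℚ_[p]) with hu
  have huind : LinearIndependent ℚ_[p] u := cast_indep _ bb.linearIndependent
  have hcardeq : Fintype.card (Fin R ⊕ Fin S)
      = Module.finrank ℚ_[p] (Matrix (Fin n) (Fin n) ℚ_[p]) := by
    have h1 : R + S = Module.finrank ℚ (Matrix (Fin n) (Fin n) ℚ) :=
      Submodule.finrank_add_eq_of_isCompl hcompl
    have h2 : Module.finrank ℚ (Matrix (Fin n) (Fin n) ℚ) = n * n := by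
      simp [Module.finrank_matrix]
    have h3 : Module.finrank ℚ_[p] (Matrix (Fin n) (Fin n) ℚ_[p]) = n * n := by
      simp [Module.finrank_matrix]
    simp [h1, h2, h3]
  have hspan : Submodule.span ℚ_[p] (Set.range u) = ⊤ :=
    huind.span_eq_top_of_card_eq_finrank' hcardeq
  have hDmem : D ∈ Submodule.span ℚ_[p] (Set.range u) := hspan ▸ Submodule.mem_top
  obtain ⟨x, hx⟩ := (Submodule.mem_span_range_iff_exists_fun ℚ_[p]).mp hDmem
  -- apply the Sylvester map; the K'-part coefficients vanish
  have hsylvcast : ∀ M : Matrix (Fin n) (Fin n) ℚ,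
      sylv Ap Bp (M.map (Rat.cast : ℚ → ℚ_[p])) = (sylv AQ BQ M).map (Rat.cast : ℚ → ℚ_[p]) := by
    intro M
    have := (sylv_map (Rat.castHom ℚ_[p]) AQ BQ M).symm
    convert this using 2 <;>
      simp [hAQ, hAp, hBQ, hBp, Matrix.map_map, Function.comp_def]
  have happ : ∑ i, x i • sylv Ap Bp (u i) = 0 := by
    simp_rw [← _root_.map_smul (sylv Ap Bp)]
    rw [← map_sum, hx, hDs]
  have hinl : ∀ i, sylv Ap Bp (u (Sum.inl i)) = 0 := by
    intro i
    rw [hu]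
    simp only
    rw [hsylvcast, hbbl]
    have : sylv AQ BQ (w i : Matrix (Fin n) (Fin n) ℚ) = 0 := (w i).2
    rw [this]
    ext k l
    simp
  have hzero : ∀ j, x (Sum.inr j) = 0 := by
    have hcind : LinearIndependent ℚ (fun j : Fin S => sylv AQ BQ (c j : Matrix (Fin n) (Fin n) ℚ)) := by
      have hcc : LinearIndependent ℚ (fun j : Fin S => (c j : Matrix (Fin n) (Fin n) ℚ)) :=
        c.linearIndependent.map' K'.subtype (Submodule.ker_subtype K')
      apply hcc.map
      have hrange : Submodule.span ℚ (Set.range (fun j : Fin S => (c j : Matrix (Fin n) (Fin n) ℚ))) ≤ K' := by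
        rw [Submodule.span_le]
        rintro y ⟨j, rfl⟩
        exact (c j).2
      exact (hcompl.symm.disjoint.mono_left hrange)
    have hcindp := cast_indep (p := p) _ hcind
    intro j
    refine Fintype.linearIndependent_iff.mp hcindp (fun j => x (Sum.inr j)) ?_ j
    have := happ
    rw [Fintype.sum_sum_type] at this
    simp only [hinl, smul_zero, Finset.sum_const_zero, zero_add] at this
    convert this using 2
    funext j'
    congr 1
    rw [hu]
    simp only
    rw [hsylvcast, hbbr]
  have hDsum : D = ∑ i : Fin R, x (Sum.inl i) • ((w i : Matrix (Fin n) (Fin n) ℚ).map (Rat.cast : ℚ → ℚ_[p])) := by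
    rw [← hx, Fintype.sum_sum_type]
    simp only [hzero, zero_smul, Finset.sum_const_zero, add_zero]
    refine Finset.sum_congr rfl fun i _ => ?_
    rw [hu]
    simp only
    rw [hbbl]
  -- integer matrices spanning the kernel
  choose d W hd hW using fun i : Fin R => exists_int_smul ((w i : Matrix (Fin n) (Fin n) ℚ))
  have hmapinj : Function.Injective (fun M : Matrix (Fin n) (Fin n) ℤ => M.map (Int.cast : ℤ → ℚ)) := by
    intro M N hMN
    ext k l
    have : ((M k l : ℚ)) = N k l := congrFun (congrFun hMN k) l
    exact_mod_cast this
  have hWsol : ∀ i, A * W i = W i * B := by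
    intro i
    apply hmapinj
    have hwK : AQ * (w i : Matrix (Fin n) (Fin n) ℚ) = (w i : Matrix (Fin n) (Fin n) ℚ) * BQ := by
      have : sylv AQ BQ (w i : Matrix (Fin n) (Fin n) ℚ) = 0 := (w i).2
      have h2 : AQ * (w i : Matrix (Fin n) (Fin n) ℚ) - (w i : Matrix (Fin n) (Fin n) ℚ) * BQ = 0 := this
      exact sub_eq_zero.mp h2
    show (A * W i).map (Int.cast : ℤ → ℚ) = (W i * B).map (Int.cast : ℤ → ℚ)
    rw [show ((A * W i).map (Int.cast : ℤ → ℚ)) = AQ * (W i).map (Int.cast : ℤ → ℚ) from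
        Matrix.map_mul (f := Int.castRingHom ℚ),
      show ((W i * B).map (Int.cast : ℤ → ℚ)) = (W i).map (Int.cast : ℤ → ℚ) * BQ from
        Matrix.map_mul (f := Int.castRingHom ℚ)]
    rw [hW i, Matrix.mul_smul, Matrix.smul_mul, hwK]
  -- move to ℚ_p with the integer matrices
  set Wp : Fin R → Matrix (Fin n) (Fin n) ℚ_[p] := fun i => (W i).map (Int.cast : ℤ → ℚ_[p])
    with hWpdef
  have hWpcast : ∀ i, Wp i
      = ((d i : ℚ_[p])) • ((w i : Matrix (Fin n) (Fin n) ℚ).map (Rat.cast : ℚ → ℚ_[p])) := by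
    intro i
    ext kk ll
    have h1 : ((W i kk ll : ℚ)) = (d i : ℚ) * ((w i : Matrix (Fin n) (Fin n) ℚ) kk ll) := by
      have := congrFun (congrFun (hW i) kk) ll
      simpa using this
    have h2 : (((W i kk ll : ℚ)) : ℚ_[p])
        = (((d i : ℚ) * ((w i : Matrix (Fin n) (Fin n) ℚ) kk ll) : ℚ) : ℚ_[p]) := by
      exact congrArg (fun q : ℚ => (q : ℚ_[p])) h1
    push_cast at h2
    simpa [hWpdef, Matrix.map_apply, Matrix.smul_apply, smul_eq_mul] using h2
  have hdp : ∀ i, ((d i : ℚ_[p])) ≠ 0 := fun i => Int.cast_ne_zero.mpr (hd i)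
  set z : Fin R → ℚ_[p] := fun i => x (Sum.inl i) * ((d i : ℚ_[p]))⁻¹ with hzdef
  have hDz : D = ∑ i, z i • Wp i := by
    rw [hDsum]
    refine Finset.sum_congr rfl fun i _ => ?_
    rw [hWpcast i]
    rw [smul_smul, hzdef]
    simp only
    rw [mul_assoc, inv_mul_cancel₀ (hdp i), mul_one]
  -- scale by a power of p to make coefficients integral
  choose k0 hk0 using fun i => exists_pow_norm_le (p := p) (z i)
  set k : ℕ := Finset.univ.sup k0 with hkdef
  have hα : ∀ i, ‖(p : ℚ_[p])^k * z i‖ ≤ 1 := fun i =>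
    pow_norm_le_mono _ (Finset.le_sup (Finset.mem_univ i)) (hk0 i)
  set α : Fin R → ℚ_[p] := fun i => (p : ℚ_[p])^k * z i with hαdef
  have hp1R : (1:ℝ) ≤ p := by exact_mod_cast (Fact.out : p.Prime).one_lt.le
  have hp0R : (0:ℝ) < p := by linarith
  set ε : ℝ := ((p:ℝ)^(-(k+1) : ℤ)) / (R+1) with hεdef
  have hεpos : 0 < ε := by
    apply div_pos (zpow_pos hp0R _)
    positivity
  have hbex : ∀ i, ∃ bi : ℤ, ‖α i - (bi : ℚ_[p])‖ < ε := by
    intro i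
    obtain ⟨bi, hbi⟩ := PadicInt.denseRange_intCast.exists_dist_lt (⟨α i, hα i⟩ : ℤ_[p]) hεpos
    refine ⟨bi, ?_⟩
    have hco : dist (⟨α i, hα i⟩ : ℤ_[p]) ((bi : ℤ_[p])) = ‖α i - (bi:ℚ_[p])‖ := by
      erw [Subtype.dist_eq]
      rw [show (((bi : ℤ_[p]) : ℚ_[p])) = (bi : ℚ_[p]) from PadicInt.coe_intCast bi]
      exact dist_eq_norm _ _
    exact hco ▸ hbi
  choose b hb using hbex
  set C'' : Matrix (Fin n) (Fin n) ℤ := ∑ i, b i • W i with hC''def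
  have hC''sol : A * C'' = C'' * B := by
    rw [hC''def, Finset.mul_sum, Finset.sum_mul]
    refine Finset.sum_congr rfl fun i _ => ?_
    rw [mul_smul_comm, smul_mul_assoc, hWsol i]
  have hC''ent : ∀ kk ll, (C'' kk ll : ℚ_[p]) = ∑ i, (b i : ℚ_[p]) * (W i kk ll : ℚ_[p]) := by
    intro kk ll
    have h1 : C'' kk ll = ∑ i, b i * W i kk ll := by
      rw [hC''def]
      simp only [Matrix.sum_apply, Matrix.smul_apply, smul_eq_mul]
    rw [h1]
    push_cast
    rfl
  have hDent : ∀ kk ll, (p:ℚ_[p])^k * D kk ll = ∑ i, α i * (Wp i kk ll) := by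
    intro kk ll
    have h1 : D kk ll = ∑ i, z i * Wp i kk ll := by
      rw [hDz]
      simp [Matrix.sum_apply]
    rw [h1, Finset.mul_sum]
    refine Finset.sum_congr rfl fun i _ => ?_
    rw [hαdef]
    ring
  have hest : ∀ kk ll, ‖(C'' kk ll : ℚ_[p]) - (p:ℚ_[p])^k * D kk ll‖ ≤ (p:ℝ)^(-(k+1):ℤ) := by
    intro kk ll
    rw [hC''ent kk ll, hDent kk ll, ← Finset.sum_sub_distrib]
    calc ‖∑ i, ((b i : ℚ_[p]) * (W i kk ll : ℚ_[p]) - α i * Wp i kk ll)‖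
        ≤ ∑ i, ‖(b i : ℚ_[p]) * (W i kk ll : ℚ_[p]) - α i * Wp i kk ll‖ :=
          norm_sum_le _ _
      _ ≤ ∑ _i : Fin R, ε := by
          apply Finset.sum_le_sum
          intro i _
          have hWent : Wp i kk ll = ((W i kk ll : ℤ) : ℚ_[p]) := rfl
          rw [hWent, ← sub_mul, norm_mul]
          calc ‖(b i : ℚ_[p]) - α i‖ * ‖((W i kk ll : ℤ) : ℚ_[p])‖
              ≤ ε * 1 := by
                apply mul_le_mul _ (Padic.norm_int_le_one _) (norm_nonneg _) hεpos.le
                rw [← norm_neg]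
                simpa [norm_sub_rev] using (hb i).le
            _ = ε := mul_one ε
      _ = (R : ℝ) * ε := by
          rw [Finset.sum_const, Finset.card_univ, Fintype.card_fin, nsmul_eq_mul]
      _ ≤ (p:ℝ)^(-(k+1):ℤ) := by
          have ht := zpow_nonneg hp0R.le (-(k+1):ℤ)
          rw [hεdef, ← mul_div_assoc, div_le_iff₀ (by positivity : (0:ℝ) < (R:ℝ)+1)]
          nlinarith
  -- entries of C'' are divisible by p^k
  have hpkn : ‖(p:ℚ_[p])^k‖ = (p:ℝ)^(-(k:ℤ)) := Padic.norm_p_pow k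
  have hC''norm : ∀ kk ll, ‖(C'' kk ll : ℚ_[p])‖ ≤ (p:ℝ)^(-(k:ℤ)) := by
    intro kk ll
    have h2 : ‖(p:ℚ_[p])^k * D kk ll‖ ≤ (p:ℝ)^(-(k:ℤ)) := by
      rw [norm_mul, hpkn]
      have hD1 : ‖D kk ll‖ ≤ 1 := by
        have : D kk ll = ((C kk ll : ℤ_[p]) : ℚ_[p]) := rfl
        rw [this]
        exact (C kk ll).2
      calc (p:ℝ)^(-(k:ℤ)) * ‖D kk ll‖ ≤ (p:ℝ)^(-(k:ℤ)) * 1 :=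
            mul_le_mul_of_nonneg_left hD1 (zpow_nonneg hp0R.le _)
        _ = (p:ℝ)^(-(k:ℤ)) := mul_one _
    have h3 := Padic.nonarchimedean
      ((C'' kk ll : ℚ_[p]) - (p:ℚ_[p])^k * D kk ll) ((p:ℚ_[p])^k * D kk ll)
    rw [sub_add_cancel] at h3
    refine le_trans h3 (max_le (le_trans (hest kk ll) ?_) h2)
    apply zpow_le_zpow_right₀ hp1R
    omega
  have hdvd : ∀ kk ll, ((p:ℤ)^k) ∣ C'' kk ll := by
    intro kk ll
    have := (Padic.norm_int_le_pow_iff_dvd (C'' kk ll) k).mp (hC''norm kk ll)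
    exact_mod_cast this
  -- divide by p^k
  set E : Matrix (Fin n) (Fin n) ℤ := Matrix.of (fun kk ll => C'' kk ll / (p:ℤ)^k) with hEdef
  have hEmul : ∀ kk ll, C'' kk ll = (p:ℤ)^k * E kk ll := by
    intro kk ll
    rw [hEdef]
    exact (Int.mul_ediv_cancel' (hdvd kk ll)).symm
  have hpk0 : ((p:ℤ)^k) ≠ 0 := by
    have : (p:ℤ) ≠ 0 := by exact_mod_cast (Fact.out : p.Prime).ne_zero
    exact pow_ne_zero _ this
  have hEsol : A * E = E * B := by
    have hCE : C'' = ((p:ℤ)^k) • E := by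
      ext kk ll
      simp [hEmul kk ll]
    have h4 : ((p:ℤ)^k) • (A * E) = ((p:ℤ)^k) • (E * B) := by
      rw [← mul_smul_comm, ← smul_mul_assoc, ← hCE, hC''sol]
    exact smul_right_injective _ hpk0 h4
  -- E is congruent to C modulo p
  have hEC : ∀ kk ll, ‖((E kk ll : ℚ_[p])) - D kk ll‖ ≤ (p:ℝ)^(-(1:ℤ)) := by
    intro kk ll
    have h5 : (p:ℚ_[p])^k * ((E kk ll : ℚ_[p]) - D kk ll)
        = (C'' kk ll : ℚ_[p]) - (p:ℚ_[p])^k * D kk ll := by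
      rw [mul_sub]
      congr 1
      have := hEmul kk ll
      have h6 : ((C'' kk ll : ℤ) : ℚ_[p]) = (((p:ℤ)^k * E kk ll : ℤ) : ℚ_[p]) := by
        exact_mod_cast congrArg (fun z : ℤ => (z : ℚ_[p])) this
      push_cast at h6
      rw [h6]
    have h7 := hest kk ll
    rw [← h5, norm_mul, hpkn] at h7
    have h8 : (p:ℝ)^(-(k+1):ℤ) = (p:ℝ)^(-(k:ℤ)) * (p:ℝ)^(-(1:ℤ)) := by
      rw [← zpow_add₀ (ne_of_gt hp0R)]
      congr 1
      ring
    rw [h8] at h7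
    have h9 : (0:ℝ) < (p:ℝ)^(-(k:ℤ)) := zpow_pos hp0R _
    exact le_of_mul_le_mul_left h7 h9
  -- pass to the residue field
  have hφ : ∀ kk ll, PadicInt.toZMod ((E kk ll : ℤ_[p])) = PadicInt.toZMod (C kk ll) := by
    intro kk ll
    have hmem : ((E kk ll : ℤ_[p])) - C kk ll ∈ IsLocalRing.maximalIdeal ℤ_[p] := by
      have h10 : ‖((E kk ll : ℤ_[p])) - C kk ll‖ ≤ (p:ℝ)^(-(1:ℤ)) := by
        rw [PadicInt.norm_def]
        have : (((E kk ll : ℤ_[p]) - C kk ll : ℤ_[p]) : ℚ_[p])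
            = ((E kk ll : ℚ_[p])) - D kk ll := by
          push_cast
          rfl
        rw [this]
        exact hEC kk ll
      have h11 := (PadicInt.norm_le_pow_iff_mem_span_pow
        (((E kk ll : ℤ_[p])) - C kk ll) 1).mp (by simpa using h10)
      rw [PadicInt.maximalIdeal_eq_span_p]
      simpa using h11
    have h12 : ((E kk ll : ℤ_[p])) - C kk ll ∈ RingHom.ker (PadicInt.toZMod (p := p)) := by
      rw [PadicInt.ker_toZMod]
      exact hmem
    have h13 := RingHom.mem_ker.mp h12
    rw [map_sub] at h13
    exact sub_eq_zero.mp h13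
  -- conclude via determinants mod p
  have hdetE : ((E.det : ZMod p)) ≠ 0 := by
    have e1 : ((E.det : ZMod p)) = (E.map (Int.cast : ℤ → ZMod p)).det :=
      RingHom.map_det (Int.castRingHom (ZMod p)) E
    have e2 : E.map (Int.cast : ℤ → ZMod p)
        = (E.map (Int.cast : ℤ → ℤ_[p])).map (PadicInt.toZMod) := by
      rw [Matrix.map_map]
      congr 1
      funext z
      simp [Function.comp_def, map_intCast]
    have e3 : (E.map (Int.cast : ℤ → ℤ_[p])).map (PadicInt.toZMod) = C.map (PadicInt.toZMod) := by
      ext kk ll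
      exact hφ kk ll
    have e4 : (C.map (PadicInt.toZMod)).det = PadicInt.toZMod C.det :=
      (RingHom.map_det (PadicInt.toZMod) C).symm
    rw [e1, e2, e3, e4]
    exact (hCu.map (PadicInt.toZMod)).ne_zero
  refine ⟨E, hEsol, fun hcon => hdetE ?_⟩
  rwa [ZMod.intCast_zmod_eq_zero_iff_dvd]
end

section
/- Let f ∈ ℤ[x] be a monic squarefree polynomial of degree n, let A, B ∈ ℤ^{n×n} both have characteristic polynomial f, and let p be a prime such that the reduction of f modulo p is squarefree in 𝔽_p[x]. Define the ℤ-linear map T on ℤ^{n×n} by T(X) = A·X − X·B. Then p·ℤ^{n×n} ∩ Im(T) ⊆ p·Im(T); that is, for every X ∈ ℤ^{n×n} such that every entry of A·X − X·B is divisible by p, there exists Z ∈ ℤ^{n×n} with A·X − X·B = p·(A·Z − Z·B). -/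
open Polynomial Matrix Finset

variable {R : Type*} [CommRing R] {n : ℕ}

/-- divided-difference operator -/
noncomputable def Dop (d : ℕ) (f : R[X]) (A B Y : Matrix (Fin n) (Fin n) R) :
    Matrix (Fin n) (Fin n) R :=
  ∑ k ∈ range (d+1), f.coeff k • (∑ i ∈ range k, A^i * Y * B^(k-1-i))

lemma tele (A B Y : Matrix (Fin n) (Fin n) R) (k : ℕ) :
    A * (∑ i ∈ range k, A^i * Y * B^(k-1-i)) - (∑ i ∈ range k, A^i * Y * B^(k-1-i)) * B
      = A^k * Y - Y * B^k := by
  induction k with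
  | zero => simp
  | succ k ih =>
    have hS : (∑ i ∈ range (k+1), A^i * Y * B^(k+1-1-i))
        = A^k * Y + (∑ i ∈ range k, A^i * Y * B^(k-1-i)) * B := by
      rw [Finset.sum_range_succ, Finset.sum_mul]
      have : ∀ i ∈ range k, A^i * Y * B^(k+1-1-i) = A^i * Y * B^(k-1-i) * B := by
        intro i hi
        have hi' : i < k := Finset.mem_range.mp hi
        have : k+1-1-i = (k-1-i)+1 := by omega
        rw [this, pow_succ]; noncomm_ring
      rw [Finset.sum_congr rfl this]
      simp [add_comm]
    rw [hS]
    have expand : A * (A^k * Y + (∑ i ∈ range k, A^i * Y * B^(k-1-i)) * B)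
        - (A^k * Y + (∑ i ∈ range k, A^i * Y * B^(k-1-i)) * B) * B
        = A^(k+1) * Y - A^k * Y * B
          + (A * (∑ i ∈ range k, A^i * Y * B^(k-1-i))
            - (∑ i ∈ range k, A^i * Y * B^(k-1-i)) * B) * B := by
      simp only [pow_succ']
      noncomm_ring
    rw [expand, ih]
    noncomm_ring

lemma Dop_sylvester (d : ℕ) (f : R[X]) (hd : f.natDegree < d + 1)
    (A B Y : Matrix (Fin n) (Fin n) R) :
    A * Dop d f A B Y - Dop d f A B Y * B = aeval A f * Y - Y * aeval B f := by
  rw [aeval_eq_sum_range' hd, aeval_eq_sum_range' hd]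
  unfold Dop
  rw [Finset.mul_sum, Finset.sum_mul, ← Finset.sum_sub_distrib, Finset.sum_mul, Finset.mul_sum,
    ← Finset.sum_sub_distrib]
  refine Finset.sum_congr rfl fun k _ => ?_
  rw [mul_smul_comm, smul_mul_assoc, ← smul_sub, tele, smul_sub, smul_mul_assoc, mul_smul_comm]

lemma pow_shift {A B X : Matrix (Fin n) (Fin n) R} (h : A * X = X * B) (m : ℕ) :
    X * B ^ m = A ^ m * X := by
  induction m with
  | zero => simp
  | succ m ih =>
    rw [pow_succ' B, pow_succ' A, ← mul_assoc, ← h, mul_assoc, ih, mul_assoc]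

lemma Dop_ker (d : ℕ) (f : R[X]) (hd : f.natDegree ≤ d)
    (A B X : Matrix (Fin n) (Fin n) R) (h : A * X = X * B) :
    Dop d f A B X = aeval A (derivative f) * X := by
  have hd' : (derivative f).natDegree < d + 1 :=
    lt_of_le_of_lt (natDegree_derivative_le f) (by omega)
  rw [aeval_eq_sum_range' hd']
  unfold Dop
  have inner : ∀ k, (∑ i ∈ range k, A^i * X * B^(k-1-i)) = k • (A^(k-1) * X) := by
    intro k
    rw [Finset.sum_congr rfl (fun i hi => ?_), Finset.sum_const, Finset.card_range]
    have hi' : i < k := Finset.mem_range.mp hi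
    rw [mul_assoc, pow_shift h, ← mul_assoc, ← pow_add]
    congr 2
    omega
  simp only [inner]
  rw [Finset.sum_mul]
  rw [Finset.sum_range_succ' (fun k => f.coeff k • (k • (A^(k-1) * X))) d]
  rw [Finset.sum_range_succ (fun k => (derivative f).coeff k • A ^ k * X) d]
  have top : (derivative f).coeff d • A ^ d * X = 0 := by
    rw [coeff_derivative, coeff_eq_zero_of_natDegree_lt (by omega), zero_mul, zero_smul, zero_mul]
  rw [top, add_zero]
  simp only [zero_smul, smul_zero, add_zero]
  refine Finset.sum_congr rfl fun j _ => ?_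
  rw [coeff_derivative, ← Nat.cast_smul_eq_nsmul R, smul_smul, smul_mul_assoc,
    Nat.add_sub_cancel]
  congr 1
  push_cast
  ring

lemma Dop_map {S : Type*} [CommRing S] (φ : ℤ →+* S) (d : ℕ) (f : ℤ[X])
    (A B Y : Matrix (Fin n) (Fin n) ℤ) :
    φ.mapMatrix (Dop d f A B Y)
      = Dop d (f.map φ) (φ.mapMatrix A) (φ.mapMatrix B) (φ.mapMatrix Y) := by
  unfold Dop
  rw [map_sum]
  refine Finset.sum_congr rfl fun k _ => ?_
  rw [map_zsmul, map_sum, coeff_map, eq_intCast, Int.cast_smul_eq_zsmul]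
  congr 1
  refine Finset.sum_congr rfl fun i _ => by rw [_root_.map_mul, _root_.map_mul, map_pow, map_pow]

lemma aeval_mapMatrix {S : Type*} [CommRing S] (φ : ℤ →+* S) (v : ℤ[X])
    (A : Matrix (Fin n) (Fin n) ℤ) :
    φ.mapMatrix (aeval A v) = aeval (φ.mapMatrix A) (v.map φ) := by
  rw [aeval_def, aeval_def, hom_eval₂, eval₂_map]
  congr 1
  exact Subsingleton.elim _ _



/-- With `f` monic squarefree of degree `n`, `A, B` having characteristic
polynomial `f`, and `p` a prime for which `f mod p` is squarefree, the Sylvester map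
`T(X) = A·X − X·B` satisfies `p·ℤ^{n×n} ∩ Im(T) ⊆ p·Im(T)`. -/
theorem sylvester_map_p_saturation
    (n : ℕ) (f : Polynomial ℤ) (hmonic : f.Monic) (hsf : Squarefree f)
    (hdeg : f.natDegree = n)
    (A B : Matrix (Fin n) (Fin n) ℤ)
    (hA : A.charpoly = f) (hB : B.charpoly = f)
    (p : ℕ) (hp : p.Prime)
    (hred : Squarefree (f.map (Int.castRingHom (ZMod p)))) :
    ∀ X : Matrix (Fin n) (Fin n) ℤ,
      (∀ i j, (p : ℤ) ∣ (A * X - X * B) i j) →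
      ∃ Z : Matrix (Fin n) (Fin n) ℤ, A * X - X * B = (p : ℤ) • (A * Z - Z * B) := by
  intro X hX
  haveI : Fact p.Prime := ⟨hp⟩
  set φ : ℤ →+* ZMod p := Int.castRingHom (ZMod p) with hφ
  set ψ : Matrix (Fin n) (Fin n) ℤ →+* Matrix (Fin n) (Fin n) (ZMod p) := φ.mapMatrix with hψ
  -- separability of f mod p
  have hsep : (f.map φ).Separable := (PerfectField.separable_iff_squarefree).mpr hred
  obtain ⟨ub, vb, huv⟩ := hsep
  obtain ⟨v, hv⟩ := Polynomial.map_surjective φ ZMod.intCast_surjective vb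
  -- the lifted kernel element
  set X₀ : Matrix (Fin n) (Fin n) ℤ := Dop n f A B (aeval A v * X) with hX₀
  have hCHA : aeval A f = 0 := by rw [← hA]; exact Matrix.aeval_self_charpoly A
  have hCHB : aeval B f = 0 := by rw [← hB]; exact Matrix.aeval_self_charpoly B
  have hdlt : f.natDegree < n + 1 := by omega
  have hT0 : A * X₀ - X₀ * B = 0 := by
    rw [hX₀, Dop_sylvester n f hdlt, hCHA, hCHB, zero_mul, mul_zero, sub_zero]
  -- reductions mod p
  have hker : ψ A * ψ X = ψ X * ψ B := by
    have h0 : ψ (A * X - X * B) = 0 := by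
      ext i j
      simp only [hψ, RingHom.mapMatrix_apply, Matrix.map_apply, Matrix.zero_apply, hφ,
        Int.coe_castRingHom]
      exact (ZMod.intCast_zmod_eq_zero_iff_dvd _ p).mpr (hX i j)
    have h1 : ψ A * ψ X - ψ X * ψ B = 0 := by
      rw [← _root_.map_mul, ← _root_.map_mul, ← map_sub]; exact h0
    exact sub_eq_zero.mp h1
  have hnb : (f.map φ).natDegree = n := by rw [Polynomial.Monic.natDegree_map hmonic]; exact hdeg
  have hcomm : ψ A * aeval (ψ A) vb = aeval (ψ A) vb * ψ A := by
    have h1 : aeval (ψ A) (Polynomial.X * vb) = aeval (ψ A) (vb * Polynomial.X) := by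
      rw [mul_comm]
    simpa only [_root_.map_mul, aeval_X] using h1
  have hkerW : ψ A * (aeval (ψ A) vb * ψ X) = (aeval (ψ A) vb * ψ X) * ψ B := by
    rw [← mul_assoc, hcomm, mul_assoc, hker, ← mul_assoc]
  have hfb0 : aeval (ψ A) (f.map φ) = 0 := by
    rw [hψ, ← aeval_mapMatrix φ f A, hCHA, map_zero]
  have hunit : aeval (ψ A) (derivative (f.map φ)) * aeval (ψ A) vb = 1 := by
    have h2 := congrArg (aeval (ψ A)) huv
    rw [map_add, _root_.map_mul, _root_.map_mul, _root_.map_one, hfb0, mul_zero, zero_add] at h2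
    calc aeval (ψ A) (derivative (f.map φ)) * aeval (ψ A) vb
        = aeval (ψ A) (derivative (f.map φ) * vb) := (_root_.map_mul _ _ _).symm
      _ = aeval (ψ A) (vb * derivative (f.map φ)) := by rw [mul_comm]
      _ = aeval (ψ A) vb * aeval (ψ A) (derivative (f.map φ)) := _root_.map_mul _ _ _
      _ = 1 := h2
  have hX0bar : ψ X₀ = ψ X := by
    rw [hX₀, hψ, Dop_map, _root_.map_mul, aeval_mapMatrix, hv]
    rw [Dop_ker n (f.map φ) (le_of_eq hnb) _ _ _ (by rw [← hψ] at *; exact hkerW)]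
    rw [← mul_assoc]
    rw [← hψ] at *
    rw [hunit, one_mul]
  have hdvd : ∀ i j, (p : ℤ) ∣ (X - X₀) i j := by
    intro i j
    have h3 : ψ (X - X₀) = 0 := by rw [map_sub, hX0bar, sub_self]
    have h4 : φ ((X - X₀) i j) = 0 := by
      have h5 : (ψ (X - X₀)) i j = (0 : Matrix (Fin n) (Fin n) (ZMod p)) i j := by rw [h3]
      simpa only [hψ, RingHom.mapMatrix_apply, Matrix.map_apply, Matrix.zero_apply] using h5
    exact (ZMod.intCast_zmod_eq_zero_iff_dvd _ p).mp h4
  refine ⟨Matrix.of fun i j => (X - X₀) i j / (p : ℤ), ?_⟩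
  set Z : Matrix (Fin n) (Fin n) ℤ := Matrix.of fun i j => (X - X₀) i j / (p : ℤ) with hZdef
  have hZ : X - X₀ = (p : ℤ) • Z := by
    ext i j
    rw [Matrix.smul_apply, hZdef]
    exact (Int.mul_ediv_cancel' (hdvd i j)).symm
  have key : A * X - X * B = (A * X₀ - X₀ * B) + (A * (X - X₀) - (X - X₀) * B) := by
    noncomm_ring
  rw [key, hT0, zero_add, hZ, mul_smul_comm, smul_mul_assoc, ← smul_sub]
end

section
/- Let A, B ∈ ℤ^{n×n}, let p be a prime, and define T(X) = A·X − X·B on ℤ^{n×n}. Suppose (i) p·ℤ^{n×n} ∩ Im(T) ⊆ p·Im(T), i.e., whenever every entry of T(X) is divisible by p there exists Z with T(X) = p·T(Z); and (ii) there exists C ∈ ℤ^{n×n} such that every entry of A·C − C·B is divisible by p and p ∤ det C. Then there exists C' ∈ ℤ^{n×n} with A·C' = C'·B and p ∤ det C'; hence A and B are conjugate by an element of GL_n(ℤ_(p)). -/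
/-- If `T(X) = A·X − X·B` satisfies `p·ℤ^{n×n} ∩ Im(T) ⊆ p·Im(T)` and there is
`C` with all entries of `A·C − C·B` divisible by `p` and `p ∤ det C`, then there is
`C'` with `A·C' = C'·B` and `p ∤ det C'`. -/
theorem lift_mod_p_conjugation
    (n : ℕ) (p : ℕ) (hp : p.Prime)
    (A B : Matrix (Fin n) (Fin n) ℤ)
    (hsat : ∀ X : Matrix (Fin n) (Fin n) ℤ,
      (∀ i j, (p : ℤ) ∣ (A * X - X * B) i j) →
      ∃ Z : Matrix (Fin n) (Fin n) ℤ, A * X - X * B = (p : ℤ) • (A * Z - Z * B))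
    (hC : ∃ C : Matrix (Fin n) (Fin n) ℤ,
      (∀ i j, (p : ℤ) ∣ (A * C - C * B) i j) ∧ ¬ (p : ℤ) ∣ C.det) :
    ∃ C' : Matrix (Fin n) (Fin n) ℤ, A * C' = C' * B ∧ ¬ (p : ℤ) ∣ C'.det := by
  obtain ⟨C, hdiv, hdet⟩ := hC
  obtain ⟨Z, hZ⟩ := hsat C hdiv
  refine ⟨C - (p : ℤ) • Z, sub_eq_zero.mp ?_, ?_⟩
  · have key : A * (C - (p : ℤ) • Z) - (C - (p : ℤ) • Z) * B
        = (A * C - C * B) - (p : ℤ) • (A * Z - Z * B) := by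
      rw [Matrix.mul_sub, Matrix.sub_mul, Matrix.mul_smul, Matrix.smul_mul, smul_sub]
      abel
    rw [key, hZ, sub_self]
  · intro hdvd
    apply hdet
    have hcast : ∀ M : Matrix (Fin n) (Fin n) ℤ,
        ((p : ℤ) ∣ M.det ↔ ((M.map (Int.cast : ℤ → ZMod p)).det = 0)) := by
      intro M
      have h1 := RingHom.map_det (Int.castRingHom (ZMod p)) M
      have h2 : (Int.castRingHom (ZMod p)).mapMatrix M = M.map (Int.cast : ℤ → ZMod p) := rfl
      rw [h2] at h1
      rw [← h1]
      exact (ZMod.intCast_zmod_eq_zero_iff_dvd _ p).symm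
    rw [hcast] at hdvd ⊢
    have hmap : (C - (p : ℤ) • Z).map (Int.cast : ℤ → ZMod p)
        = C.map (Int.cast : ℤ → ZMod p) := by
      ext i j
      simp only [Matrix.map_apply, Matrix.sub_apply, Matrix.smul_apply, smul_eq_mul]
      push_cast
      simp [ZMod.natCast_self]
    rwa [hmap] at hdvd
end

section
/- Let A = [[0, 1], [−5, 0]] and B = [[−1, 2], [−3, 1]], both 2×2 integer matrices with characteristic polynomial x² + 5. Then A and B are not ℤ-conjugate: there is no C ∈ ℤ^{2×2} with det C ∈ {1, −1} and A·C = C·B. -/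
/-- The matrices `A = [[0,1],[-5,0]]` and `B = [[-1,2],[-3,1]]` (both with
characteristic polynomial `x² + 5`) are not `ℤ`-conjugate. -/
theorem not_int_conjugate_example :
    ¬ ∃ C : Matrix (Fin 2) (Fin 2) ℤ, (C.det = 1 ∨ C.det = -1) ∧
      (!![0, 1; -5, 0] : Matrix (Fin 2) (Fin 2) ℤ) * C
        = C * (!![-1, 2; -3, 1] : Matrix (Fin 2) (Fin 2) ℤ) := by
  rintro ⟨C, hdet, hmul⟩
  have h00 := congrFun (congrFun hmul 0) 0
  have h01 := congrFun (congrFun hmul 0) 1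
  rw [Matrix.det_fin_two] at hdet
  simp [Matrix.mul_apply, Fin.sum_univ_two] at h00 h01
  set a := C 0 0 with ha
  set b := C 0 1 with hb
  set c := C 1 0 with hc
  set d := C 1 1 with hd
  have key : (2*a + b)^2 + 5*b^2 = 2 ∨ (2*a + b)^2 + 5*b^2 = -2 := by
    rcases hdet with h | h
    · left; rw [h00, h01] at h; ring_nf at h ⊢; linarith
    · right; rw [h00, h01] at h; ring_nf at h ⊢; linarith
  rcases key with h | h
  · have hbsq : b ^ 2 = 0 := by
      have h1 := sq_nonneg (2*a + b)
      have h2 := sq_nonneg b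
      obtain ⟨x, hx⟩ : ∃ x : ℤ, x = b ^ 2 := ⟨_, rfl⟩
      rw [← hx] at h h2 ⊢
      omega
    have hb0 : b = 0 := by
      exact pow_eq_zero_iff (n := 2) (by norm_num) |>.mp hbsq
    rw [hb0] at h
    have h2 : 2 * (a ^ 2) = 1 := by ring_nf at h ⊢; linarith
    obtain ⟨x, hx⟩ : ∃ x : ℤ, x = a ^ 2 := ⟨_, rfl⟩
    rw [← hx] at h2
    omega
  · have h1 := sq_nonneg (2*a + b)
    have h2 := sq_nonneg b
    linarith
end

section
/- Let A = [[0, 1], [−5, 0]] and B = [[−1, 2], [−3, 1]], both 2×2 integer matrices with characteristic polynomial x² + 5. Then A and B are locally conjugate: for every prime p there exists C ∈ ℤ_p^{2×2} with det C a unit of ℤ_p and A·C = C·B. -/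
lemma isUnit_int_cast_padic (p : ℕ) [Fact p.Prime] (n : ℤ) (h : ¬ (p : ℤ) ∣ n) :
    IsUnit ((n : ℤ) : ℤ_[p]) := by
  rw [PadicInt.isUnit_iff]
  refine le_antisymm (PadicInt.norm_le_one _) ?_
  by_contra hlt
  exact h ((PadicInt.norm_int_lt_one_iff_dvd n).1 (lt_of_not_ge hlt))

lemma conj_transfer (p : ℕ) [Fact p.Prime] (A B C : Matrix (Fin 2) (Fin 2) ℤ)
    (h : A * C = C * B) :
    A.map (Int.cast : ℤ → ℤ_[p]) * C.map (Int.cast : ℤ → ℤ_[p])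
      = C.map (Int.cast : ℤ → ℤ_[p]) * B.map (Int.cast : ℤ → ℤ_[p]) := by
  have key : ∀ M N : Matrix (Fin 2) (Fin 2) ℤ,
      (M * N).map (Int.cast : ℤ → ℤ_[p]) = M.map Int.cast * N.map Int.cast :=
    fun M N => Matrix.map_mul (f := Int.castRingHom ℤ_[p])
  rw [← key, ← key, h]

lemma det_cast (p : ℕ) [Fact p.Prime] (C : Matrix (Fin 2) (Fin 2) ℤ) :
    (C.map (Int.cast : ℤ → ℤ_[p])).det = ((C.det : ℤ) : ℤ_[p]) :=
  ((Int.castRingHom ℤ_[p]).map_det C).symm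

/-- The matrices `A = [[0,1],[-5,0]]` and `B = [[-1,2],[-3,1]]` (both with
characteristic polynomial `x² + 5`) are locally conjugate: `ℤ_p`-conjugate for every prime. -/
theorem locally_conjugate_example :
    ∀ (p : ℕ) [Fact p.Prime],
      ∃ C : Matrix (Fin 2) (Fin 2) ℤ_[p], IsUnit C.det ∧
        (!![0, 1; -5, 0] : Matrix (Fin 2) (Fin 2) ℤ).map (Int.cast : ℤ → ℤ_[p]) * C
          = C * (!![-1, 2; -3, 1] : Matrix (Fin 2) (Fin 2) ℤ).map (Int.cast : ℤ → ℤ_[p]) := by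
  intro p _
  have hp := (Fact.out : p.Prime)
  by_cases h2 : p = 2
  · refine ⟨(!![0, 1; -3, 1] : Matrix (Fin 2) (Fin 2) ℤ).map (Int.cast : ℤ → ℤ_[p]), ?_, ?_⟩
    · rw [det_cast]
      have : (!![0, 1; -3, 1] : Matrix (Fin 2) (Fin 2) ℤ).det = 3 := by decide
      rw [this]
      refine isUnit_int_cast_padic p 3 ?_
      subst h2; decide
    · exact conj_transfer p _ _ _ (by decide)
  · refine ⟨(!![1, 0; -1, 2] : Matrix (Fin 2) (Fin 2) ℤ).map (Int.cast : ℤ → ℤ_[p]), ?_, ?_⟩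
    · rw [det_cast]
      have : (!![1, 0; -1, 2] : Matrix (Fin 2) (Fin 2) ℤ).det = 2 := by decide
      rw [this]
      refine isUnit_int_cast_padic p 2 ?_
      intro hd
      rw [show ((2:ℤ)) = ((2:ℕ):ℤ) from rfl, Int.natCast_dvd_natCast] at hd
      exact h2 ((Nat.prime_dvd_prime_iff_eq hp Nat.prime_two).1 hd)
    · exact conj_transfer p _ _ _ (by decide)
end

section
/- Let R = ℤ[√2] be the ring of integers of ℚ(√2). Then the matrices A = [[−1, 3], [3, 1]] and B = [[0, 10], [1, 0]] (both with characteristic polynomial x² − 10, B being the companion matrix of x² − 10) are R-conjugate: there exists C ∈ R^{2×2} with det C a unit of R and A·C = C·B. -/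
/-- Over `R = ℤ[√2]`, the ring of integers of `ℚ(√2)`, the matrices
`A = [[-1,3],[3,1]]` and `B = [[0,10],[1,0]]` (both with characteristic polynomial
`x² − 10`) are `R`-conjugate. -/
theorem conjugate_over_Zsqrt2 :
    ∃ C : Matrix (Fin 2) (Fin 2) (ℤ√2), IsUnit C.det ∧
      (!![-1, 3; 3, 1] : Matrix (Fin 2) (Fin 2) ℤ).map (Int.cast : ℤ → ℤ√2) * C
        = C * (!![0, 10; 1, 0] : Matrix (Fin 2) (Fin 2) ℤ).map (Int.cast : ℤ → ℤ√2) := by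
  refine ⟨!![⟨1,0⟩, ⟨-1,3⟩; ⟨0,1⟩, ⟨3,1⟩], IsUnit.of_mul_eq_one ⟨-3,-2⟩ ?_, ?_⟩
  · show (!![(⟨1,0⟩ : ℤ√2), ⟨-1,3⟩; ⟨0,1⟩, ⟨3,1⟩]).det * ⟨-3,-2⟩ = 1
    simp [Matrix.det_fin_two]
    ext <;> simp [Zsqrtd.ext_iff]
  · refine Matrix.ext fun i j => ?_
    fin_cases i <;> fin_cases j <;>
      simp [Matrix.mul_apply, Fin.sum_univ_succ, Zsqrtd.ext_iff]
end

section
/- Let R = ℤ[√3] be the ring of integers of ℚ(√3). Then the matrices A = [[−1, 2], [7, 1]] and B = [[0, 15], [1, 0]] (both with characteristic polynomial x² − 15, B being the companion matrix of x² − 15) are R-conjugate: there exists C ∈ R^{2×2} with det C a unit of R and A·C = C·B. -/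
/-- Over `R = ℤ[√3]`, the ring of integers of `ℚ(√3)`, the matrices
`A = [[-1,2],[7,1]]` and `B = [[0,15],[1,0]]` (both with characteristic polynomial
`x² − 15`) are `R`-conjugate. -/
theorem conjugate_over_Zsqrt3 :
    ∃ C : Matrix (Fin 2) (Fin 2) (ℤ√3), IsUnit C.det ∧
      (!![-1, 2; 7, 1] : Matrix (Fin 2) (Fin 2) ℤ).map (Int.cast : ℤ → ℤ√3) * C
        = C * (!![0, 15; 1, 0] : Matrix (Fin 2) (Fin 2) ℤ).map (Int.cast : ℤ → ℤ√3) := by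
  refine ⟨!![⟨1,2⟩, ⟨-13,-2⟩; ⟨-6,0⟩, ⟨1,14⟩], ?_, ?_⟩
  · rw [Matrix.det_fin_two_of]
    exact IsUnit.of_mul_eq_one (a := _) (⟨7,-4⟩ : ℤ√3) (by decide)
  · refine Matrix.ext fun i j => ?_
    fin_cases i <;> fin_cases j <;>
      simp [Matrix.mul_apply, Fin.sum_univ_two] <;> decide
end

section
/- Let A = [[−2, 37], [3, 3]] and B = [[0, 117], [1, 1]], both 2×2 integer matrices with characteristic polynomial x² − x − 117. Then A and B are ℤ_p-conjugate for every prime p (i.e., locally conjugate), but A and B are not ℤ-conjugate: there is no C ∈ ℤ^{2×2} with det C ∈ {1, −1} and A·C = C·B. -/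
set_option maxRecDepth 10000 in
private lemma base_nat17 : ∀ k ≤ 41, ∀ n : ℕ, n^2 + 12 ≠ 469 * k^2 := by
  have hd : ∀ n < 900, ∀ k < 42, n^2 + 12 ≠ 469 * k^2 := by decide
  intro k hk n h
  have hn : n < 900 := by
    by_contra hn
    push_neg at hn
    have : 900^2 ≤ n^2 := Nat.pow_le_pow_left hn 2
    have : 469 * k^2 ≤ 469 * 41^2 := by
      have := Nat.pow_le_pow_left hk 2
      omega
    omega
  exact hd n hn k (by omega) h

/-- The Pell-type equation `m² - 469 c² = -12` has no integer solutions. -/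
private lemma no_sol17 : ∀ k : ℕ, ∀ m c : ℤ, c.natAbs = k → m^2 - 469*c^2 = -12 → False := by
  intro k
  induction k using Nat.strong_induction_on with
  | _ k ih =>
    intro m c hk heq
    have hM2 : |m|^2 - 469*(k:ℤ)^2 = -12 := by
      rw [sq_abs, ← hk, Int.natCast_natAbs, sq_abs]; exact heq
    set M := |m| with hMdef
    have hM : 0 ≤ M := abs_nonneg m
    by_cases hsmall : k ≤ 41
    · have hcast : (M.natAbs : ℤ)^2 + 12 = 469 * (k:ℤ)^2 := by
        rw [Int.natCast_natAbs, abs_abs]; linarith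
      have : (M.natAbs)^2 + 12 = 469 * k^2 := by exact_mod_cast hcast
      exact base_nat17 k hsmall M.natAbs this
    · push_neg at hsmall
      have hk42 : (42:ℤ) ≤ (k:ℤ) := by exact_mod_cast hsmall
      set c' : ℤ := 137215*(k:ℤ) - 6336*M with hc'
      set m' : ℤ := 137215*M - 2971584*(k:ℤ) with hm'
      have heq' : m'^2 - 469*c'^2 = -12 := by
        rw [hm', hc']; linear_combination hM2
      have h1 : 1 ≤ c' := by nlinarith [sq_nonneg (k:ℤ)]
      have h2 : c' < k := by nlinarith
      have hlt : c'.natAbs < k := by omega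
      exact ih c'.natAbs hlt m' c' rfl heq'

/-- The matrices `A = [[-2,37],[3,3]]` and `B = [[0,117],[1,1]]` (both with
characteristic polynomial `x² − x − 117`) are `ℤ_p`-conjugate for every prime `p`, but are
not `ℤ`-conjugate. -/
theorem locally_conjugate_not_int_conjugate_example :
    (∀ (p : ℕ) [Fact p.Prime],
      ∃ C : Matrix (Fin 2) (Fin 2) ℤ_[p], IsUnit C.det ∧
        (!![-2, 37; 3, 3] : Matrix (Fin 2) (Fin 2) ℤ).map (Int.cast : ℤ → ℤ_[p]) * C
          = C * (!![0, 117; 1, 1] : Matrix (Fin 2) (Fin 2) ℤ).map (Int.cast : ℤ → ℤ_[p])) ∧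
    ¬ ∃ C : Matrix (Fin 2) (Fin 2) ℤ, (C.det = 1 ∨ C.det = -1) ∧
      (!![-2, 37; 3, 3] : Matrix (Fin 2) (Fin 2) ℤ) * C
        = C * (!![0, 117; 1, 1] : Matrix (Fin 2) (Fin 2) ℤ) := by
  constructor
  · intro p hp
    have key : ∀ C₀ : Matrix (Fin 2) (Fin 2) ℤ,
        (!![-2, 37; 3, 3] : Matrix (Fin 2) (Fin 2) ℤ) * C₀ = C₀ * !![0, 117; 1, 1] →
        ¬ (p:ℤ) ∣ C₀.det →
        ∃ C : Matrix (Fin 2) (Fin 2) ℤ_[p], IsUnit C.det ∧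
          (!![-2, 37; 3, 3] : Matrix (Fin 2) (Fin 2) ℤ).map (Int.cast : ℤ → ℤ_[p]) * C
            = C * (!![0, 117; 1, 1] : Matrix (Fin 2) (Fin 2) ℤ).map (Int.cast : ℤ → ℤ_[p]) := by
      intro C₀ hmul hdvd
      refine ⟨C₀.map (Int.cast : ℤ → ℤ_[p]), ?_, ?_⟩
      · have hdet : (C₀.map (Int.cast : ℤ → ℤ_[p])).det = ((C₀.det : ℤ) : ℤ_[p]) :=
          (RingHom.map_det (Int.castRingHom ℤ_[p]) C₀).symm
        rw [hdet, PadicInt.isUnit_iff]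
        have h1 : ‖((C₀.det : ℤ) : ℤ_[p])‖ ≤ 1 := PadicInt.norm_le_one _
        have h2 : ¬ ‖((C₀.det : ℤ) : ℤ_[p])‖ < 1 := by
          rw [PadicInt.norm_int_lt_one_iff_dvd]; exact hdvd
        linarith [lt_or_eq_of_le h1, h2]
      · have hfun : (Int.cast : ℤ → ℤ_[p]) = ⇑(Int.castRingHom ℤ_[p]) := rfl
        rw [hfun, ← Matrix.map_mul, ← Matrix.map_mul, hmul]
    by_cases h3 : p = 3
    · refine key !![0, 37; 1, 3] (by decide) ?_
      subst h3
      simp [Matrix.det_fin_two]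
    · refine key !![1, -2; 0, 3] (by decide) ?_
      have hd : (!![1, -2; 0, 3] : Matrix (Fin 2) (Fin 2) ℤ).det = 3 := by
        simp [Matrix.det_fin_two]
      rw [hd]
      intro hdvd
      have : p ∣ 3 := by exact_mod_cast hdvd
      exact h3 ((Nat.prime_dvd_prime_iff_eq hp.out (by norm_num)).mp this)
  · rintro ⟨C, hdet, hAC⟩
    set a := C 0 0; set b := C 0 1; set c := C 1 0; set d := C 1 1
    rw [← Matrix.ext_iff] at hAC
    have h00 := hAC 0 0
    have h10 := hAC 1 0
    simp [Matrix.mul_apply, Fin.sum_univ_two] at h00 h10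
    have hdet' : C.det = 3*a^2 + 5*a*c - 37*c^2 := by
      rw [Matrix.det_fin_two]
      linear_combination c * h00 - a * h10
    rw [hdet'] at hdet
    rcases hdet with h | h
    · have hm : ((6*a+5*c : ℤ) : ZMod 7)^2 - 469*((c:ℤ) : ZMod 7)^2 = 12 := by
        have : (6*a+5*c)^2 - 469*c^2 = 12 := by linear_combination 12 * h
        calc ((6*a+5*c : ℤ) : ZMod 7)^2 - 469*((c:ℤ) : ZMod 7)^2
            = (((6*a+5*c)^2 - 469*c^2 : ℤ) : ZMod 7) := by push_cast; ring
          _ = 12 := by rw [this]; norm_num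
      have : ∀ x y : ZMod 7, x^2 - 469*y^2 ≠ 12 := by decide
      exact this _ _ hm
    · have : (6*a+5*c)^2 - 469*c^2 = -12 := by linear_combination 12 * h
      exact no_sol17 c.natAbs (6*a+5*c) c rfl this
end

section
/- Let K be a field containing ℚ, let α ∈ K, and let A, B ∈ ℤ^{n×n}. Suppose v, w : {1,…,n} → K are families that are each linearly independent over ℚ and satisfy Σ_j A_{ij}·v_j = α·v_i and Σ_j B_{ij}·w_j = α·w_i for all i. If there exists a nonzero γ ∈ K with span_ℤ{v_1,…,v_n} = γ·span_ℤ{w_1,…,w_n} (equality of ℤ-submodules of K), then A and B are ℤ-conjugate: there exists C ∈ ℤ^{n×n} with det C ∈ {1, −1} and C⁻¹·A·C = B. -/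
private lemma coeff_eq_of_linIndep {n : ℕ} {K : Type*} [Field K] [Algebra ℚ K]
    {u : Fin n → K} (hu : LinearIndependent ℚ u) (c d : Fin n → ℤ)
    (h : ∑ k, (c k : K) * u k = ∑ k, (d k : K) * u k) : c = d := by
  funext k
  have h0 : ∑ k, ((c k - d k : ℤ) : ℚ) • u k = 0 := by
    have he : ∀ k, ((c k - d k : ℤ) : ℚ) • u k = (c k : K) * u k - (d k : K) * u k := by
      intro k
      rw [Algebra.smul_def, map_intCast]
      push_cast
      ring
    simp only [he, Finset.sum_sub_distrib, h, sub_self]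
  have h1 : ((c k - d k : ℤ) : ℚ) = 0 := Fintype.linearIndependent_iff.mp hu _ h0 k
  have h2 : (c k - d k : ℤ) = 0 := by exact_mod_cast h1
  omega

/-- Latimer–MacDuffee, sufficiency: If `A` and `B` are the matrices of
multiplication by `α` on the `ℤ`-lattices spanned by `ℚ`-linearly independent families
`v` and `w` in a field `K ⊇ ℚ`, and the two lattices differ by multiplication by a nonzero
`γ ∈ K`, then `A` and `B` are `ℤ`-conjugate. -/
theorem int_conjugate_of_equivalent_lattices
    (n : ℕ) (K : Type*) [Field K] [Algebra ℚ K] (α : K)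
    (A B : Matrix (Fin n) (Fin n) ℤ) (v w : Fin n → K)
    (hv : LinearIndependent ℚ v) (hw : LinearIndependent ℚ w)
    (hAv : ∀ i, ∑ j, (A i j : K) * v j = α * v i)
    (hBw : ∀ i, ∑ j, (B i j : K) * w j = α * w i)
    (γ : K) (hγ : γ ≠ 0)
    (hspan : Submodule.span ℤ (Set.range v)
      = Submodule.map (LinearMap.mulLeft ℤ γ) (Submodule.span ℤ (Set.range w))) :
    ∃ C : Matrix (Fin n) (Fin n) ℤ, (C.det = 1 ∨ C.det = -1) ∧ C⁻¹ * A * C = B := by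
  -- Express each `v i` as an integer combination of the `γ * w j`.
  have hvmem : ∀ i, ∃ p : Fin n → ℤ, v i = ∑ j, (p j : K) * (γ * w j) := by
    intro i
    have hmem : v i ∈ Submodule.map (LinearMap.mulLeft ℤ γ) (Submodule.span ℤ (Set.range w)) := by
      rw [← hspan]; exact Submodule.subset_span ⟨i, rfl⟩
    obtain ⟨y, hy, hyv⟩ := hmem
    obtain ⟨p, hp⟩ := (Submodule.mem_span_range_iff_exists_fun ℤ).mp hy
    refine ⟨p, ?_⟩
    have : γ * y = v i := hyv
    rw [← this, ← hp, Finset.mul_sum]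
    apply Finset.sum_congr rfl
    intro j _
    rw [zsmul_eq_mul]
    ring
  -- Express each `γ * w i` as an integer combination of the `v j`.
  have hwmem : ∀ i, ∃ q : Fin n → ℤ, γ * w i = ∑ j, (q j : K) * v j := by
    intro i
    have hmem : γ * w i ∈ Submodule.span ℤ (Set.range v) := by
      rw [hspan]
      exact ⟨w i, Submodule.subset_span ⟨i, rfl⟩, rfl⟩
    obtain ⟨q, hq⟩ := (Submodule.mem_span_range_iff_exists_fun ℤ).mp hmem
    refine ⟨q, ?_⟩
    rw [← hq]
    apply Finset.sum_congr rfl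
    intro j _
    rw [zsmul_eq_mul]
  choose P hP using hvmem
  choose Q hQ using hwmem
  set Pm : Matrix (Fin n) (Fin n) ℤ := Matrix.of P with hPm
  set Qm : Matrix (Fin n) (Fin n) ℤ := Matrix.of Q with hQm
  -- `Pm * Qm = 1`.
  have hPQ : Pm * Qm = 1 := by
    ext i k
    have key : v i = ∑ k, (((Pm * Qm) i k : ℤ) : K) * v k := by
      calc v i = ∑ j, (P i j : K) * (γ * w j) := hP i
        _ = ∑ j, (P i j : K) * ∑ k, (Q j k : K) * v k := by
              apply Finset.sum_congr rfl; intro j _; rw [hQ j]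
        _ = ∑ j, ∑ k, ((P i j * Q j k : ℤ) : K) * v k := by
              apply Finset.sum_congr rfl; intro j _
              rw [Finset.mul_sum]; apply Finset.sum_congr rfl; intro k _
              push_cast; ring
        _ = ∑ k, ∑ j, ((P i j * Q j k : ℤ) : K) * v k := Finset.sum_comm
        _ = ∑ k, (((Pm * Qm) i k : ℤ) : K) * v k := by
              apply Finset.sum_congr rfl; intro k _
              rw [← Finset.sum_mul]
              congr 1
              rw [Matrix.mul_apply]
              push_cast
              rfl
    have hvi : ∑ k, (((1 : Matrix (Fin n) (Fin n) ℤ) i k : ℤ) : K) * v k = v i := by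
      simp [Matrix.one_apply]
    have := coeff_eq_of_linIndep hv (fun k => (Pm * Qm) i k)
      (fun k => (1 : Matrix (Fin n) (Fin n) ℤ) i k) (by rw [← key, hvi])
    exact congrFun this k
  have hQP : Qm * Pm = 1 := mul_eq_one_comm.mp hPQ
  -- `A * Pm = Pm * B`.
  have hAP : A * Pm = Pm * B := by
    ext i k
    have lhs : α * v i = γ * ∑ k, (((A * Pm) i k : ℤ) : K) * w k := by
      rw [← hAv i]
      calc ∑ j, (A i j : K) * v j
          = ∑ j, ∑ k, ((A i j * P j k : ℤ) : K) * (γ * w k) := by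
            apply Finset.sum_congr rfl; intro j _
            rw [hP j, Finset.mul_sum]
            apply Finset.sum_congr rfl; intro k _; push_cast; ring
        _ = ∑ k, ∑ j, ((A i j * P j k : ℤ) : K) * (γ * w k) := Finset.sum_comm
        _ = γ * ∑ k, (((A * Pm) i k : ℤ) : K) * w k := by
            rw [Finset.mul_sum]
            apply Finset.sum_congr rfl; intro k _
            rw [Matrix.mul_apply]
            push_cast
            rw [Finset.sum_mul, Finset.mul_sum]
            apply Finset.sum_congr rfl; intro j _
            simp only [hPm, Matrix.of_apply]
            ring
    have rhs : α * v i = γ * ∑ k, (((Pm * B) i k : ℤ) : K) * w k := by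
      calc α * v i
          = ∑ j, ∑ k, ((P i j * B j k : ℤ) : K) * (γ * w k) := by
            rw [hP i, Finset.mul_sum]
            apply Finset.sum_congr rfl; intro j _
            rw [show α * ((P i j : K) * (γ * w j)) = (P i j : K) * γ * (α * w j) by ring,
              ← hBw j, Finset.mul_sum]
            apply Finset.sum_congr rfl; intro k _; push_cast; ring
        _ = ∑ k, ∑ j, ((P i j * B j k : ℤ) : K) * (γ * w k) := Finset.sum_comm
        _ = γ * ∑ k, (((Pm * B) i k : ℤ) : K) * w k := by
            rw [Finset.mul_sum]
            apply Finset.sum_congr rfl; intro k _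
            rw [Matrix.mul_apply]
            push_cast
            rw [Finset.sum_mul, Finset.mul_sum]
            apply Finset.sum_congr rfl; intro j _
            simp only [hPm, Matrix.of_apply]
            ring
    have heq : ∑ k, (((A * Pm) i k : ℤ) : K) * w k = ∑ k, (((Pm * B) i k : ℤ) : K) * w k :=
      mul_left_cancel₀ hγ (by rw [← lhs, ← rhs])
    exact congrFun (coeff_eq_of_linIndep hw _ _ heq) k
  -- Conclude.
  refine ⟨Pm, ?_, ?_⟩
  · have : Pm.det * Qm.det = 1 := by rw [← Matrix.det_mul, hPQ, Matrix.det_one]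
    rcases Int.isUnit_iff.mp (IsUnit.of_mul_eq_one _ this) with h | h
    · exact Or.inl h
    · exact Or.inr h
  · have hinv : Pm⁻¹ = Qm := Matrix.inv_eq_left_inv hQP
    rw [hinv, Matrix.mul_assoc, hAP, ← Matrix.mul_assoc, hQP, Matrix.one_mul]
end
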